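/- Fix p ∈ (0, 1/2). Define ψ_p : [0,1]² → ℝ by ψ_p(s,t) = |s−t|^{−p} (for s ≠ t), and for n ≥ 1 let t_i = i/n and define the step function ψ_{n,p}(s,t) = Σ_{0≤i,j≤n−1, i≠j} |t_i − t_j|^{−p} · 1_{[t_i,t_{i+1})}(s) · 1_{[t_j,t_{j+1})}(t) (so ψ_{n,p} vanishes on the diagonal cells). Then there exists a constant C > 0, depending only on p, such that for every n ≥ 1: ∫_0^1 ∫_0^1 |ψ_p(s,t) − ψ_{n,p}(s,t)|² ds dt ≤ C · n^{−2(1−2p)/3}. -/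

import Mathlib

open MeasureTheory Real

noncomputable section

/-- The kernel `ψ_p(s,t) = |s−t|^{−p}`. -/
def psiP (p s t : ℝ) : ℝ := |s - t| ^ (-p)

/-- The grid discretization `ψ_{n,p}` of `ψ_p` (vanishing on the diagonal cells). -/
def psiNP (p : ℝ) (n : ℕ) (s t : ℝ) : ℝ :=
  ∑ i ∈ Finset.range n, ∑ j ∈ Finset.range n,
    (if i = j then 0 else |(i : ℝ) / n - (j : ℝ) / n| ^ (-p)) *
      Set.indicator (Set.Ico ((i : ℝ) / n) (((i : ℝ) + 1) / n)) (fun _ => (1 : ℝ)) s *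
      Set.indicator (Set.Ico ((j : ℝ) / n) (((j : ℝ) + 1) / n)) (fun _ => (1 : ℝ)) t

open Set

/-- MVT estimate: `|x^{-p} - y^{-p}| ≤ p m^{-p-1} |x-y|` for `x,y ≥ m > 0`. -/
lemma mvt_rpow (p : ℝ) (hp0 : 0 < p) {m x y : ℝ} (hm : 0 < m) (hx : m ≤ x) (hy : m ≤ y) :
    |x ^ (-p) - y ^ (-p)| ≤ p * m ^ (-p - 1) * |x - y| := by
  wlog hxy : x ≤ y generalizing x y
  · rw [abs_sub_comm, abs_sub_comm x y]; exact this hy hx (le_of_not_ge hxy)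
  rcases eq_or_lt_of_le hxy with rfl | hlt
  · simp [hp0.le, mul_nonneg, Real.rpow_nonneg]
  have hx0 : 0 < x := hm.trans_le hx
  have hcont : ContinuousOn (fun z : ℝ => z ^ (-p)) (Icc x y) := by
    apply ContinuousOn.rpow_const continuousOn_id
    intro z hz
    exact Or.inl (ne_of_gt (hx0.trans_le hz.1))
  have hderiv : ∀ z ∈ Ioo x y, HasDerivAt (fun z : ℝ => z ^ (-p)) ((-p) * z ^ (-p - 1)) z := by
    intro z hz
    exact Real.hasDerivAt_rpow_const (Or.inl (ne_of_gt (hx0.trans hz.1)))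
  obtain ⟨c, hc, hceq⟩ := exists_hasDerivAt_eq_slope (fun z : ℝ => z ^ (-p))
    (fun z => (-p) * z ^ (-p - 1)) hlt hcont hderiv
  have hyx : 0 < y - x := sub_pos.mpr hlt
  have : x ^ (-p) - y ^ (-p) = p * c ^ (-p - 1) * (y - x) := by
    have := hceq
    field_simp at this
    nlinarith [this]
  have hc0 : (0:ℝ) ≤ c := (hx0.trans hc.1).le
  rw [this, abs_of_nonneg (mul_nonneg (mul_nonneg hp0.le (Real.rpow_nonneg hc0 _)) hyx.le),
    abs_sub_comm, abs_of_pos hyx]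
  have hcm : m ≤ c := hx.trans hc.1.le
  have h2 : c ^ (-p - 1) ≤ m ^ (-p - 1) :=
    Real.rpow_le_rpow_of_nonpos hm hcm (by linarith)
  exact mul_le_mul_of_nonneg_right (mul_le_mul_of_nonneg_left h2 hp0.le) hyx.le

lemma mem_cell_iff {n k : ℕ} (hn : 0 < n) {s : ℝ} (hs0 : 0 ≤ s) :
    s ∈ Set.Ico ((k : ℝ) / n) (((k : ℝ) + 1) / n) ↔ ⌊(n : ℝ) * s⌋₊ = k := by
  have hnR : (0:ℝ) < n := Nat.cast_pos.mpr hn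
  have h0 : 0 ≤ (n:ℝ) * s := mul_nonneg hnR.le hs0
  rw [Set.mem_Ico, div_le_iff₀ hnR, lt_div_iff₀ hnR, mul_comm s (n:ℝ), Nat.floor_eq_iff h0]

lemma psiNP_eval (p : ℝ) {n : ℕ} (hn : 0 < n) {s t : ℝ}
    (hs : s ∈ Set.Ico (0:ℝ) 1) (ht : t ∈ Set.Ico (0:ℝ) 1) :
    psiNP p n s t =
      (if ⌊(n:ℝ)*s⌋₊ = ⌊(n:ℝ)*t⌋₊ then 0
       else |((⌊(n:ℝ)*s⌋₊ : ℝ))/n - ((⌊(n:ℝ)*t⌋₊ : ℝ))/n| ^ (-p)) := by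
  have hnR : (0:ℝ) < n := Nat.cast_pos.mpr hn
  set i := ⌊(n:ℝ)*s⌋₊ with hi
  set j := ⌊(n:ℝ)*t⌋₊ with hj
  have his : s ∈ Set.Ico ((i:ℝ)/n) (((i:ℝ)+1)/n) := (mem_cell_iff hn hs.1).mpr rfl
  have hjt : t ∈ Set.Ico ((j:ℝ)/n) (((j:ℝ)+1)/n) := (mem_cell_iff hn ht.1).mpr rfl
  have hin : i < n := by
    rw [Nat.floor_lt (mul_nonneg hnR.le hs.1)]
    calc (n:ℝ)*s < n*1 := by exact mul_lt_mul_of_pos_left hs.2 hnR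
    _ = n := mul_one _
  have hjn : j < n := by
    rw [Nat.floor_lt (mul_nonneg hnR.le ht.1)]
    calc (n:ℝ)*t < n*1 := by exact mul_lt_mul_of_pos_left ht.2 hnR
    _ = n := mul_one _
  unfold psiNP
  rw [Finset.sum_eq_single i]
  · rw [Finset.sum_eq_single j]
    · rw [Set.indicator_of_mem his, Set.indicator_of_mem hjt]; ring_nf
    · intro b _ hb
      rw [Set.indicator_of_notMem (fun h => hb ((mem_cell_iff hn ht.1).mp h).symm), mul_zero]
    · intro h; exact absurd (Finset.mem_range.mpr hjn) h
  · intro b _ hb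
    apply Finset.sum_eq_zero
    intro c _
    rw [Set.indicator_of_notMem (fun h => hb ((mem_cell_iff hn hs.1).mp h).symm), mul_zero, zero_mul]
  · intro h; exact absurd (Finset.mem_range.mpr hin) h

def gfun (p : ℝ) (n : ℕ) (u : ℝ) : ℝ :=
  if |u| ≤ 4 / n then 2 * ((|u| ^ (-p)) ^ 2 + ((n : ℝ) ^ p) ^ 2)
  else (p * (|u| / 2) ^ (-p - 1) * ((n : ℝ))⁻¹) ^ 2

lemma gfun_nonneg (p : ℝ) (n : ℕ) (u : ℝ) : 0 ≤ gfun p n u := by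
  unfold gfun; split_ifs <;> positivity

lemma gfun_neg (p : ℝ) (n : ℕ) (u : ℝ) : gfun p n (-u) = gfun p n u := by
  simp [gfun, abs_neg]

/-- the constant in the bound for `∫_{(0,1]} gfun`. -/
def Cc (p : ℝ) : ℝ :=
  2 * (4:ℝ) ^ (1 - 2*p) / (1 - 2*p) + 8 + p^2 * (2:ℝ)^(2*p+2) * (4:ℝ)^(-(2*p+1)) / (2*p+1)

lemma rpow_sq {x : ℝ} (hx : 0 < x) (r : ℝ) : (x ^ r) ^ 2 = x ^ (2*r) := by
  rw [pow_two, ← Real.rpow_add hx]; congr 1 <;> ring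

lemma div_rpow_eq {a : ℝ} (ha : 0 ≤ a) {b : ℝ} (hb : 0 < b) (r : ℝ) :
    (a/b) ^ r = a ^ r * b ^ (-r) := by
  rw [Real.div_rpow ha hb.le, div_eq_mul_inv, ← Real.rpow_neg hb.le]


lemma integral_gfun (p : ℝ) (hp0 : 0 < p) (hp : p < 1/2) {n : ℕ} (hn : 1 ≤ n) :
    IntegrableOn (gfun p n) (Set.Ioc (0:ℝ) 1) ∧
    ∫ u in Set.Ioc (0:ℝ) 1, gfun p n u ≤ Cc p * (n:ℝ) ^ (2*p - 1) := by
  have hnR : (0:ℝ) < n := by exact_mod_cast hn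
  set δ : ℝ := 4 / n with hδ
  have hδ0 : 0 < δ := by positivity
  set np2 : ℝ := ((n:ℝ) ^ p) ^ 2 with hnp2
  set Cf : ℝ := p^2 * (2:ℝ)^(2*p+2) * ((n:ℝ)⁻¹)^2 with hCf
  set near : ℝ → ℝ := fun u => 2 * u ^ (-(2*p)) + 2 * np2 with hnear
  set far : ℝ → ℝ := fun u => Cf * u ^ (-(2*p+2)) with hfar
  set hfn : ℝ → ℝ := fun u =>
    Set.indicator (Set.Ioc 0 δ) near u + Set.indicator (Set.Ioi δ) far u with hhfn
  -- gfun = hfn on Ioi 0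
  have hgh : ∀ u ∈ Set.Ioi (0:ℝ), gfun p n u = hfn u := by
    intro u hu
    have hu0 : (0:ℝ) < u := hu
    have habs : |u| = u := abs_of_pos hu0
    by_cases hc : u ≤ δ
    · simp only [hhfn,
        Set.indicator_of_mem (Set.mem_Ioc.mpr ⟨hu0, hc⟩),
        Set.indicator_of_notMem (by simpa using hc : u ∉ Set.Ioi δ), add_zero]
      unfold gfun
      rw [habs, if_pos hc, rpow_sq hu0, hnear]
      rw [show (2 * -p) = -(2*p) by ring]
      ring
    · push_neg at hc
      simp only [hhfn,
        Set.indicator_of_notMem (by simp [hc.not_ge] : u ∉ Set.Ioc 0 δ),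
        Set.indicator_of_mem (Set.mem_Ioi.mpr hc), zero_add]
      unfold gfun
      rw [habs, if_neg (not_le.mpr hc)]
      have h2 : (u/2) ^ (-p-1) = u ^ (-p-1) * (2:ℝ) ^ (p+1) := by
        rw [Real.div_rpow hu0.le (by norm_num), div_eq_mul_inv]
        congr 1
        rw [show (-p-1 : ℝ) = -(p+1) by ring, Real.rpow_neg (by norm_num), inv_inv]
      have e1 : (u ^ (-p-1))^2 = u ^ (-(2*p+2)) := by
        rw [rpow_sq hu0]; congr 1 <;> ring
      have e2 : ((2:ℝ) ^ (p+1))^2 = (2:ℝ) ^ (2*p+2) := by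
        rw [rpow_sq two_pos]; congr 1 <;> ring
      rw [h2]
      show (p * (u ^ (-p-1) * (2:ℝ)^(p+1)) * ((n:ℝ))⁻¹) ^ 2
        = p^2 * (2:ℝ)^(2*p+2) * ((n:ℝ)⁻¹)^2 * u ^ (-(2*p+2))
      rw [← e1, ← e2]; ring
  -- integrability of the two pieces
  have hr_int : IntegrableOn (fun u : ℝ => u ^ (-(2*p))) (Set.Ioc 0 δ) := by
    exact (intervalIntegrable_iff_integrableOn_Ioc_of_le hδ0.le).mp
      (intervalIntegral.intervalIntegrable_rpow' (by linarith))
  have hconst_int : IntegrableOn (fun _ : ℝ => 2 * np2) (Set.Ioc (0:ℝ) δ) :=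
    (integrableOn_const_iff).mpr (Or.inr measure_Ioc_lt_top)
  have hnear_int : IntegrableOn near (Set.Ioc 0 δ) := by
    exact (hr_int.const_mul 2).add hconst_int
  have hfar_int : IntegrableOn far (Set.Ioi δ) := by
    exact (integrableOn_Ioi_rpow_of_lt (by linarith) hδ0).const_mul Cf
  have hfn_int : Integrable hfn := by
    exact (hnear_int.integrable_indicator measurableSet_Ioc).add
      (hfar_int.integrable_indicator measurableSet_Ioi)
  have hfn_nonneg : ∀ u, 0 ≤ hfn u := by
    intro u
    apply add_nonneg <;> apply Set.indicator_nonneg <;> intro x hx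
    · have : (0:ℝ) < x := hx.1
      positivity
    · have hx0 : (0:ℝ) < x := lt_trans hδ0 hx
      positivity
  have hIoc_int : IntegrableOn (gfun p n) (Set.Ioc (0:ℝ) 1) := by
    apply (hfn_int.integrableOn).congr_fun ?_ measurableSet_Ioc
    intro u hu
    exact (hgh u (Set.mem_Ioi.mpr hu.1)).symm
  refine ⟨hIoc_int, ?_⟩
  -- the integral computation
  have step1 : ∫ u in Set.Ioc (0:ℝ) 1, gfun p n u = ∫ u in Set.Ioc (0:ℝ) 1, hfn u :=
    setIntegral_congr_fun measurableSet_Ioc (fun u hu => hgh u hu.1)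
  have step2 : ∫ u in Set.Ioc (0:ℝ) 1, hfn u ≤ ∫ u, hfn u :=
    setIntegral_le_integral hfn_int (Filter.Eventually.of_forall hfn_nonneg)
  have step3 : ∫ u, hfn u = (∫ u in Set.Ioc (0:ℝ) δ, near u) + ∫ u in Set.Ioi δ, far u := by
    simp only [hhfn]
    rw [integral_add (hnear_int.integrable_indicator measurableSet_Ioc)
      (hfar_int.integrable_indicator measurableSet_Ioi),
      integral_indicator measurableSet_Ioc, integral_indicator measurableSet_Ioi]
  -- compute the near integral
  have hI1 : ∫ u in Set.Ioc (0:ℝ) δ, u ^ (-(2*p)) = δ ^ (1-2*p) / (1-2*p) := by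
    rw [← intervalIntegral.integral_of_le hδ0.le,
      integral_rpow (Or.inl (by linarith : (-1:ℝ) < -(2*p))),
      Real.zero_rpow (by linarith : -(2*p) + 1 ≠ 0),
      show -(2*p) + 1 = 1 - 2*p by ring]
    ring
  have hInear : ∫ u in Set.Ioc (0:ℝ) δ, near u
      = 2 * (δ ^ (1-2*p) / (1-2*p)) + 2 * np2 * δ := by
    simp only [hnear]
    rw [integral_add (hr_int.const_mul 2) hconst_int, integral_const_mul, hI1,
      setIntegral_const, Real.volume_real_Ioc_of_le hδ0.le, smul_eq_mul, sub_zero]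
    ring
  have hIfar : ∫ u in Set.Ioi δ, far u = Cf * (δ ^ (-(2*p+1)) / (2*p+1)) := by
    simp only [hfar]
    rw [integral_const_mul, integral_Ioi_rpow_of_lt (by linarith) hδ0,
      show -(2*p+2) + 1 = -(2*p+1) by ring, neg_div_neg_eq]
  -- final assembly
  have htot : ∫ u in Set.Ioc (0:ℝ) 1, gfun p n u
      ≤ (2 * (δ ^ (1-2*p) / (1-2*p)) + 2 * np2 * δ) + Cf * (δ ^ (-(2*p+1)) / (2*p+1)) := by
    rw [step1, ← hInear, ← hIfar]
    exact step2.trans (le_of_eq step3)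
  have t1 : 2 * (δ ^ (1-2*p)/(1-2*p)) = (2 * (4:ℝ)^(1-2*p)/(1-2*p)) * (n:ℝ)^(2*p-1) := by
    rw [hδ, div_rpow_eq (by norm_num) hnR, show -(1-2*p) = 2*p-1 by ring]; ring
  have t2 : 2 * np2 * δ = 8 * (n:ℝ)^(2*p-1) := by
    rw [hnp2, rpow_sq hnR, hδ, div_eq_mul_inv, ← Real.rpow_neg_one (n:ℝ)]
    have e : (n:ℝ)^(2*p) * (n:ℝ)^(-1:ℝ) = (n:ℝ)^(2*p-1) := by
      rw [← Real.rpow_add hnR]; congr 1 <;> ring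
    linear_combination (8:ℝ) * e
  have t3 : Cf * (δ^(-(2*p+1))/(2*p+1))
      = (p^2*(2:ℝ)^(2*p+2)*(4:ℝ)^(-(2*p+1))/(2*p+1)) * (n:ℝ)^(2*p-1) := by
    rw [hCf, hδ, div_rpow_eq (by norm_num) hnR, show -(-(2*p+1)) = 2*p+1 by ring,
      ← Real.rpow_neg_one (n:ℝ), rpow_sq hnR]
    have e : (n:ℝ)^(2*(-1:ℝ)) * (n:ℝ)^(2*p+1) = (n:ℝ)^(2*p-1) := by
      rw [← Real.rpow_add hnR]; congr 1 <;> ring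
    linear_combination (p^2*(2:ℝ)^(2*p+2)*(4:ℝ)^(-(2*p+1))/(2*p+1)) * e
  calc ∫ u in Set.Ioc (0:ℝ) 1, gfun p n u
      ≤ (2 * (δ ^ (1-2*p) / (1-2*p)) + 2 * np2 * δ) + Cf * (δ ^ (-(2*p+1)) / (2*p+1)) := htot
  _ = Cc p * (n:ℝ)^(2*p-1) := by
      unfold Cc
      linear_combination t1 + t2 + t3

lemma key_pointwise (p : ℝ) (hp0 : 0 < p) {n : ℕ} (hn : 0 < n) {s t : ℝ}
    (hs : s ∈ Set.Ico (0:ℝ) 1) (ht : t ∈ Set.Ico (0:ℝ) 1) (hst : s ≠ t) :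
    (psiP p s t - psiNP p n s t) ^ 2 ≤ gfun p n (s - t) := by
  have hnR : (0:ℝ) < n := Nat.cast_pos.mpr hn
  set d := |s - t| with hd
  have hd0 : 0 < d := abs_pos.mpr (sub_ne_zero.mpr hst)
  set i := ⌊(n:ℝ)*s⌋₊ with hi
  set j := ⌊(n:ℝ)*t⌋₊ with hj
  have his : s ∈ Set.Ico ((i:ℝ)/n) (((i:ℝ)+1)/n) := (mem_cell_iff hn hs.1).mpr rfl
  have hjt : t ∈ Set.Ico ((j:ℝ)/n) (((j:ℝ)+1)/n) := (mem_cell_iff hn ht.1).mpr rfl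
  set q := |(i:ℝ)/n - (j:ℝ)/n| with hq
  -- |d - q| ≤ 1/n
  have hadd : ((i:ℝ)+1)/n = (i:ℝ)/n + 1/n := by ring
  have hadd' : ((j:ℝ)+1)/n = (j:ℝ)/n + 1/n := by ring
  have hdq : |d - q| ≤ 1/n := by
    have h1 : |(s - t) - ((i:ℝ)/n - (j:ℝ)/n)| ≤ 1/n := by
      rw [abs_le]
      have := his.1; have h2 := his.2; have := hjt.1; have h4 := hjt.2
      rw [hadd] at h2; rw [hadd'] at h4
      constructor <;> linarith
    calc |d - q| ≤ |(s - t) - ((i:ℝ)/n - (j:ℝ)/n)| := abs_abs_sub_abs_le_abs_sub _ _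
    _ ≤ 1/n := h1
  -- if i ≠ j then q ≥ 1/n
  have hq_lb : i ≠ j → 1/n ≤ q := by
    intro hij
    have h1 : (1:ℝ) ≤ |(i:ℝ) - (j:ℝ)| := by
      rcases Nat.lt_or_ge i j with h | h
      · have h2 : (i:ℝ) + 1 ≤ j := by exact_mod_cast h
        rw [abs_sub_comm, abs_of_nonneg (by linarith)]; linarith
      · have hji : j < i := lt_of_le_of_ne h (Ne.symm hij)
        have h2 : (j:ℝ) + 1 ≤ i := by exact_mod_cast hji
        rw [abs_of_nonneg (by linarith)]; linarith
    have h2 : q = |(i:ℝ) - (j:ℝ)| / n := by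
      rw [hq, div_sub_div_same, abs_div, abs_of_pos hnR]
    rw [h2]; gcongr
  have hpsiP : psiP p s t = d ^ (-p) := rfl
  rw [psiNP_eval p hn hs ht, hpsiP]
  have hgarg : |s - t| = d := rfl
  by_cases hcase : d ≤ 4 / n
  · -- near-diagonal case
    unfold gfun
    rw [hgarg, if_pos hcase]
    by_cases hij : i = j
    · rw [if_pos hij]
      nlinarith [sq_nonneg (d ^ (-p)), sq_nonneg ((n:ℝ) ^ p)]
    · rw [if_neg hij]
      have hb0 : 0 ≤ q ^ (-p) := Real.rpow_nonneg (abs_nonneg _) _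
      have hb : q ^ (-p) ≤ (n:ℝ) ^ p := by
        have h1 : q ^ (-p) ≤ ((1:ℝ)/n) ^ (-p) :=
          Real.rpow_le_rpow_of_nonpos (by positivity) (hq_lb hij) (by linarith)
        have h2 : ((1:ℝ)/n) ^ (-p) = (n:ℝ) ^ p := by
          rw [one_div, Real.inv_rpow hnR.le, Real.rpow_neg hnR.le, inv_inv]
        linarith
      nlinarith [sq_nonneg (d ^ (-p) + q ^ (-p)), sq_nonneg (d ^ (-p) - q ^ (-p)),
        Real.rpow_nonneg (abs_nonneg (s-t)) (-p)]
  · -- far case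
    push_neg at hcase
    have hij : i ≠ j := by
      intro h
      have hq0 : q = 0 := by rw [hq, h, sub_self, abs_zero]
      rw [hq0, sub_zero, abs_of_pos hd0] at hdq
      have h14 : (1:ℝ)/n ≤ 4/n := by gcongr; norm_num
      linarith
    rw [if_neg hij]
    have h1n : (1:ℝ)/n < d/4 := by
      rw [div_lt_iff₀ hnR] at hcase
      rw [div_lt_iff₀ hnR]
      linarith
    have hqd : d/2 ≤ q := by
      have h1 := (abs_le.mp hdq).2
      linarith
    have hd2 : (0:ℝ) < d/2 := by linarith
    have hmvt := mvt_rpow p hp0 (m := d/2) (x := d) (y := q) hd2 (by linarith) hqd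
    have hRHS : p * (d/2) ^ (-p-1) * |d - q| ≤ p * (d/2) ^ (-p-1) * (1/n) :=
      mul_le_mul_of_nonneg_left hdq (by positivity)
    unfold gfun
    rw [hgarg, if_neg (not_le.mpr hcase), inv_eq_one_div]
    rw [← sq_abs (d ^ (-p) - q ^ (-p))]
    apply pow_le_pow_left₀ (abs_nonneg _)
    calc |d ^ (-p) - q ^ (-p)| ≤ p * (d/2) ^ (-p-1) * |d - q| := hmvt
    _ ≤ p * (d/2) ^ (-p-1) * (1/n) := hRHS

lemma ae_ne_real (c : ℝ) : ∀ᵐ t : ℝ, t ≠ c := by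
  have h : {t : ℝ | ¬ t ≠ c} = {c} := by ext x; simp
  rw [ae_iff, h]
  exact measure_singleton c

theorem grid_approximation_L2
    (p : ℝ) (hp0 : 0 < p) (hp : p < 1 / 2) :
    ∃ C : ℝ, 0 < C ∧
      ∀ n : ℕ, 1 ≤ n →
        (∫ s in Set.Ioc (0 : ℝ) 1, ∫ t in Set.Ioc (0 : ℝ) 1,
            (psiP p s t - psiNP p n s t) ^ 2) ≤
          C * (n : ℝ) ^ (-(2 * (1 - 2 * p) / 3)) := by
  have hCc : 0 < Cc p := by
    have h1 : (0:ℝ) < 2 * (4:ℝ) ^ (1 - 2*p) / (1 - 2*p) := by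
      apply div_pos (by positivity) (by linarith)
    have h2 : (0:ℝ) < p^2 * (2:ℝ)^(2*p+2) * (4:ℝ)^(-(2*p+1)) / (2*p+1) := by
      apply div_pos (by positivity) (by linarith)
    unfold Cc; linarith
  refine ⟨2 * Cc p, by linarith, ?_⟩
  intro n hn
  have hnR : (0:ℝ) < n := by exact_mod_cast hn
  obtain ⟨hgint, hgbound⟩ := integral_gfun p hp0 hp hn
  -- interval integrability of gfun on [-1,1]
  have I1 : IntervalIntegrable (gfun p n) volume 0 1 :=
    (intervalIntegrable_iff_integrableOn_Ioc_of_le zero_le_one).mpr hgint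
  have I2 : IntervalIntegrable (gfun p n) volume (-1) 0 := by
    have h := (IntervalIntegrable.iff_comp_neg (f := gfun p n)).mp I1
    simp only [gfun_neg, neg_zero] at h
    exact h.symm
  have I12 : IntervalIntegrable (gfun p n) volume (-1) 1 := I2.trans I1
  -- reflection
  have Brefl : ∫ u in (-1:ℝ)..0, gfun p n u = ∫ u in (0:ℝ)..1, gfun p n u := by
    have h := intervalIntegral.integral_comp_neg (a := (0:ℝ)) (b := 1) (f := gfun p n)
    simp only [gfun_neg, neg_zero] at h
    exact h.symm
  set B : ℝ := ∫ u in (-1:ℝ)..1, gfun p n u with hB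
  have hBval : B = 2 * ∫ u in (0:ℝ)..1, gfun p n u := by
    rw [hB, ← intervalIntegral.integral_add_adjacent_intervals I2 I1, Brefl]; ring
  have hBbound : B ≤ 2 * (Cc p * (n:ℝ) ^ (2*p - 1)) := by
    rw [hBval, intervalIntegral.integral_of_le zero_le_one]
    linarith
  -- inner integral bound, for s ∈ Ioo 0 1
  have hinner : ∀ s ∈ Set.Ioo (0:ℝ) 1,
      (∫ t in Set.Ioc (0:ℝ) 1, (psiP p s t - psiNP p n s t) ^ 2) ≤ B := by
    intro s hs
    have hsIco : s ∈ Set.Ico (0:ℝ) 1 := ⟨hs.1.le, hs.2⟩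
    -- integrability of t ↦ gfun (s - t) on Ioc 0 1
    have hsub : Set.uIcc (0:ℝ) 1 ⊆ Set.uIcc (s - -1) (s - 1) := by
      rw [Set.uIcc_of_le zero_le_one, Set.uIcc_of_ge (by linarith : s - 1 ≤ s - -1)]
      exact Set.Icc_subset_Icc (by linarith [hs.1, hs.2]) (by linarith [hs.1, hs.2])
    have Ig' : IntervalIntegrable (fun t => gfun p n (s - t)) volume 0 1 :=
      (I12.comp_sub_left s).mono_set hsub
    have Ig : IntegrableOn (fun t => gfun p n (s - t)) (Set.Ioc (0:ℝ) 1) :=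
      (intervalIntegrable_iff_integrableOn_Ioc_of_le zero_le_one).mp Ig'
    have hae : ∀ᵐ t ∂(volume.restrict (Set.Ioc (0:ℝ) 1)),
        (psiP p s t - psiNP p n s t) ^ 2 ≤ gfun p n (s - t) := by
      filter_upwards [ae_restrict_mem measurableSet_Ioc,
        ae_restrict_of_ae (ae_ne_real 1), ae_restrict_of_ae (ae_ne_real s)]
        with t ht ht1 hts
      exact key_pointwise p hp0 (by omega : 0 < n) hsIco
        ⟨ht.1.le, lt_of_le_of_ne ht.2 ht1⟩ (Ne.symm hts)
    calc (∫ t in Set.Ioc (0:ℝ) 1, (psiP p s t - psiNP p n s t) ^ 2)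
        ≤ ∫ t in Set.Ioc (0:ℝ) 1, gfun p n (s - t) :=
          integral_mono_of_nonneg (Filter.Eventually.of_forall (fun t => sq_nonneg _)) Ig hae
      _ = ∫ t in (0:ℝ)..1, gfun p n (s - t) :=
          (intervalIntegral.integral_of_le zero_le_one).symm
      _ = ∫ u in (s-1)..s, gfun p n u := by
          rw [intervalIntegral.integral_comp_sub_left (fun u => gfun p n u) s]
          norm_num
      _ ≤ B := intervalIntegral.integral_mono_interval (by linarith [hs.1] : (-1:ℝ) ≤ s-1)
          (by linarith : s-1 ≤ s) (hs.2.le)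
          (Filter.Eventually.of_forall (fun u => gfun_nonneg p n u)) I12
  -- outer integral
  have houter : (∫ s in Set.Ioc (0:ℝ) 1, ∫ t in Set.Ioc (0:ℝ) 1,
      (psiP p s t - psiNP p n s t) ^ 2) ≤ B := by
    have hconst : IntegrableOn (fun _ : ℝ => B) (Set.Ioc (0:ℝ) 1) :=
      (integrableOn_const_iff).mpr (Or.inr measure_Ioc_lt_top)
    have hae : ∀ᵐ s ∂(volume.restrict (Set.Ioc (0:ℝ) 1)),
        (∫ t in Set.Ioc (0:ℝ) 1, (psiP p s t - psiNP p n s t) ^ 2) ≤ B := by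
      filter_upwards [ae_restrict_mem measurableSet_Ioc, ae_restrict_of_ae (ae_ne_real 1)]
        with s hsm hs1
      exact hinner s ⟨hsm.1, lt_of_le_of_ne hsm.2 hs1⟩
    have h := integral_mono_of_nonneg
      (Filter.Eventually.of_forall
        (fun s => integral_nonneg (fun t => sq_nonneg _))) hconst hae
    calc (∫ s in Set.Ioc (0:ℝ) 1, ∫ t in Set.Ioc (0:ℝ) 1,
        (psiP p s t - psiNP p n s t) ^ 2) ≤ ∫ _ in Set.Ioc (0:ℝ) 1, B := h
      _ = B := by
          rw [setIntegral_const, Real.volume_real_Ioc, smul_eq_mul]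
          norm_num
  -- conclude
  have hexp : (n:ℝ) ^ (2*p - 1) ≤ (n:ℝ) ^ (-(2 * (1 - 2 * p) / 3)) :=
    Real.rpow_le_rpow_of_exponent_le (by exact_mod_cast hn) (by linarith)
  calc (∫ s in Set.Ioc (0:ℝ) 1, ∫ t in Set.Ioc (0:ℝ) 1,
      (psiP p s t - psiNP p n s t) ^ 2) ≤ B := houter
    _ ≤ 2 * (Cc p * (n:ℝ) ^ (2*p - 1)) := hBbound
    _ ≤ 2 * Cc p * (n:ℝ) ^ (-(2 * (1 - 2 * p) / 3)) := by
        rw [mul_assoc]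
        exact mul_le_mul_of_nonneg_left
          (mul_le_mul_of_nonneg_left hexp hCc.le) (by norm_num)


end
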